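/- For all k ≥ 2, s ≥ 1 and every colouring of the k-sets of ℕ with r = s colours (the case t = k), ℕ can be partitioned into the cores of at most s monochromatic tight paths of distinct colours. -/

import Mathlib

/-- A monochromatic `k`-uniform tight path of colour `c` (a single vertex, or
finite of length ≥ 1, or one-way infinite) in the complete `k`-graph on `ℕ`
coloured by `φ`: a sequence of distinct vertices `v 0, v 1, …` (of length
`N ∈ ℕ∞`) such that every `k` consecutive vertices form an edge of colour `c`.
The core `X` is the vertex set. -/
def IsMonoTightPath (k : ℕ) {r : ℕ} (φ : Finset ℕ → Fin r) (c : Fin r)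
    (X : Set ℕ) : Prop :=
  ∃ (N : ℕ∞) (v : ℕ → ℕ),
    (N = 1 ∨ (k : ℕ∞) ≤ N) ∧
    (∀ i j : ℕ, (i : ℕ∞) < N → (j : ℕ∞) < N → v i = v j → i = j) ∧
    X = {x | ∃ i : ℕ, (i : ℕ∞) < N ∧ v i = x} ∧
    ∀ i : ℕ, ((i + k : ℕ) : ℕ∞) ≤ N →
      φ (Finset.image v (Finset.Ico i (i + k))) = c

open Filter

namespace ESSS

variable {s : ℕ} (k : ℕ) (φ : Finset ℕ → Fin s) (U : Ultrafilter ℕ)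

lemma exists_colour (f : ℕ → Fin s) : ∃ c, {x | f x = c} ∈ U := by
  by_contra h
  push_neg at h
  have h1 : ∀ c : Fin s, {x | f x = c}ᶜ ∈ U := fun c =>
    (Ultrafilter.compl_mem_iff_notMem).2 (h c)
  have h2 : (⋂ c : Fin s, {x | f x = c}ᶜ) ∈ U := Filter.iInter_mem.2 h1
  obtain ⟨x, hx⟩ := Ultrafilter.nonempty_of_mem h2
  simp only [Set.mem_iInter, Set.mem_compl_iff, Set.mem_setOf_eq] at hx
  exact hx (f x) rfl

noncomputable def g : ℕ → Finset ℕ → Fin s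
  | 0 => φ
  | (ℓ+1) => fun A => (exists_colour U (fun x => g ℓ (insert x A))).choose

lemma g_zero (A : Finset ℕ) : g φ U 0 A = φ A := rfl

lemma g_mem (ℓ : ℕ) (A : Finset ℕ) {c : Fin s} (h : g φ U (ℓ+1) A = c) :
    {x | g φ U ℓ (insert x A) = c} ∈ U := by
  have := (exists_colour U (fun x => g φ U ℓ (insert x A))).choose_spec
  have h2 : g φ U (ℓ+1) A = (exists_colour U (fun x => g φ U ℓ (insert x A))).choose := rfl
  rw [← h2, h] at this
  exact this

/-- last `j` vertices of `M` as a finset -/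
def lastN (j : ℕ) (M : List ℕ) : Finset ℕ :=
  Finset.image (fun t => M.getD t 0) (Finset.Ico (M.length - j) M.length)

/-- the window of `k` vertices starting at position `i` -/
def winF (M : List ℕ) (i : ℕ) : Finset ℕ :=
  Finset.image (fun t => M.getD t 0) (Finset.Ico i (i + k))

lemma lastN_zero (M : List ℕ) : lastN 0 M = ∅ := by
  simp [lastN]

lemma lastN_append (j : ℕ) (hj : 1 ≤ j) (M : List ℕ) (y : ℕ) :
    lastN j (M ++ [y]) = insert y (lastN (j-1) M) := by
  unfold lastN
  have hlen : (M ++ [y]).length = M.length + 1 := by simp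
  rw [hlen]
  have h1 : M.length + 1 - j ≤ M.length := by omega
  have h2 : Finset.Ico (M.length + 1 - j) (M.length + 1)
      = insert M.length (Finset.Ico (M.length + 1 - j) M.length) := by
    rw [Nat.Ico_succ_right_eq_insert_Ico h1]
  rw [h2, Finset.image_insert]
  have h3 : (M ++ [y]).getD M.length 0 = y := by
    rw [List.getD_append_right _ _ _ _ le_rfl]
    simp
  rw [h3]
  congr 1
  · have h4 : M.length + 1 - j = M.length - (j - 1) := by omega
    rw [h4]
    apply Finset.image_congr
    intro t ht
    simp only [Finset.coe_Ico, Set.mem_Ico] at ht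
    exact List.getD_append _ _ _ _ ht.2
def Tight (c : Fin s) (M : List ℕ) : Prop := ∀ i, i + k ≤ M.length → φ (winF k M i) = c

def EndG (c : Fin s) (i : ℕ) (M : List ℕ) : Prop :=
  ∀ j, i+1 ≤ j → j ≤ k → j ≤ M.length → g φ U (k-j) (lastN j M) = c

def XC (c : Fin s) (x : ℕ) (i : ℕ) (M : List ℕ) : Prop :=
  ∀ m, m ≤ i → m ≤ k-1 → g φ U (k-1-m) (insert x (lastN m M)) = c

lemma winF_append (M : List ℕ) (y : ℕ) (i : ℕ) (h : i + k ≤ M.length) :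
    winF k (M ++ [y]) i = winF k M i := by
  unfold winF
  apply Finset.image_congr
  intro t ht
  simp only [Finset.coe_Ico, Set.mem_Ico] at ht
  exact List.getD_append _ _ _ _ (by omega)

lemma step_y (hU : ∀ A : Set ℕ, A.Finite → Aᶜ ∈ U) (hk : 2 ≤ k)
    (c : Fin s) (x : ℕ) (i : ℕ) (M : List ℕ) (F : Finset ℕ) (hik : i ≤ k - 2)
    (hnd : M.Nodup) (hxM : x ∉ M)
    (ht : Tight k φ c M) (hB : EndG k φ U c i M) (hC : XC k φ U c x i M) :
    ∃ y, y ∉ F ∧ y ∉ M ∧ y ≠ x ∧ (M ++ [y]).Nodup ∧ x ∉ M ++ [y] ∧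
      Tight k φ c (M ++ [y]) ∧ EndG k φ U c (i+1) (M ++ [y]) ∧
      XC k φ U c x (i+1) (M ++ [y]) := by
  have hA : (↑(F ∪ M.toFinset ∪ {x}) : Set ℕ)ᶜ ∈ U := hU _ (Finset.finite_toSet _)
  -- family for EndG
  have hBset : ∀ j ∈ Finset.range (k+1),
      {y : ℕ | i + 2 ≤ j → j ≤ k → j ≤ M.length + 1 →
        g φ U (k-j) (insert y (lastN (j-1) M)) = c} ∈ U := by
    intro j _
    by_cases hcond : i + 2 ≤ j ∧ j ≤ k ∧ j ≤ M.length + 1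
    · obtain ⟨h1, h2, h3⟩ := hcond
      have hprev : g φ U (k-(j-1)) (lastN (j-1) M) = c :=
        hB (j-1) (by omega) (by omega) (by omega)
      have heq : k - (j-1) = (k - j) + 1 := by omega
      rw [heq] at hprev
      exact Filter.mem_of_superset (g_mem φ U (k-j) (lastN (j-1) M) hprev)
        (fun y hy _ _ _ => hy)
    · apply Filter.univ_mem'
      intro y
      simp only [Set.mem_setOf_eq]
      intro h1 h2 h3
      exact absurd ⟨h1, h2, h3⟩ hcond
  have hBall : {y : ℕ | ∀ j, i + 2 ≤ j → j ≤ k → j ≤ M.length + 1 →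
      g φ U (k-j) (insert y (lastN (j-1) M)) = c} ∈ U := by
    have h2 := (Filter.biInter_finset_mem (Finset.range (k+1))).2 hBset
    apply Filter.mem_of_superset h2
    intro y hy
    simp only [Set.mem_iInter, Set.mem_setOf_eq] at hy ⊢
    intro j h1 h2' h3
    exact hy j (Finset.mem_range.2 (by omega)) h1 h2' h3
  -- family for XC
  have hCset : ∀ m ∈ Finset.range (k+1),
      {y : ℕ | 1 ≤ m → m ≤ i + 1 → m ≤ k - 1 →
        g φ U (k-1-m) (insert x (insert y (lastN (m-1) M))) = c} ∈ U := by
    intro m _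
    by_cases hcond : 1 ≤ m ∧ m ≤ i + 1 ∧ m ≤ k - 1
    · obtain ⟨h1, h2, h3⟩ := hcond
      have hprev : g φ U (k-1-(m-1)) (insert x (lastN (m-1) M)) = c :=
        hC (m-1) (by omega) (by omega)
      have heq : k - 1 - (m-1) = (k - 1 - m) + 1 := by omega
      rw [heq] at hprev
      apply Filter.mem_of_superset (g_mem φ U (k-1-m) _ hprev)
      intro y hy _ _ _
      rw [Finset.insert_comm]
      exact hy
    · apply Filter.univ_mem'
      intro y
      simp only [Set.mem_setOf_eq]
      intro h1 h2 h3
      exact absurd ⟨h1, h2, h3⟩ hcond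
  have hCall : {y : ℕ | ∀ m, 1 ≤ m → m ≤ i + 1 → m ≤ k - 1 →
      g φ U (k-1-m) (insert x (insert y (lastN (m-1) M))) = c} ∈ U := by
    have h2 := (Filter.biInter_finset_mem (Finset.range (k+1))).2 hCset
    apply Filter.mem_of_superset h2
    intro y hy
    simp only [Set.mem_iInter, Set.mem_setOf_eq] at hy ⊢
    intro m h1 h2' h3
    exact hy m (Finset.mem_range.2 (by omega)) h1 h2' h3
  obtain ⟨y, hy⟩ := Ultrafilter.nonempty_of_mem (Filter.inter_mem hA (Filter.inter_mem hBall hCall))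
  obtain ⟨hyavoid, hyB, hyC⟩ := hy
  simp only [Set.mem_compl_iff, Finset.coe_union, Set.mem_union, Finset.mem_coe,
    Finset.coe_singleton, Set.mem_singleton_iff, not_or, Finset.mem_coe,
    List.mem_toFinset] at hyavoid
  obtain ⟨⟨hyF, hyM⟩, hyx⟩ := hyavoid
  simp only [Set.mem_setOf_eq] at hyB hyC
  have hnd' : (M ++ [y]).Nodup := by
    simp [List.nodup_append, hnd, hyM]
    intro a ha h; exact hyM (h ▸ ha)
  have hxM' : x ∉ M ++ [y] := by
    simp only [List.mem_append, List.mem_singleton, not_or]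
    exact ⟨hxM, fun h => hyx h.symm⟩
  refine ⟨y, hyF, hyM, hyx, hnd', hxM', ?_, ?_, ?_⟩
  · -- Tight
    intro i' hlen
    simp only [List.length_append, List.length_singleton] at hlen
    rcases Nat.lt_or_ge (i' + k) (M.length + 1) with hlt | hge
    · rw [winF_append k M y i' (by omega)]
      exact ht i' (by omega)
    · have hieq : i' + k = M.length + 1 := by omega
      have hwin : winF k (M ++ [y]) i' = lastN k (M ++ [y]) := by
        unfold winF lastN
        congr 1
        simp only [List.length_append, List.length_singleton]
        congr 1 <;> omega
      rw [hwin, lastN_append k (by omega)]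
      have := hyB k (by omega) le_rfl (by omega)
      rwa [Nat.sub_self, g_zero] at this
  · -- EndG
    intro j h1 h2 h3
    simp only [List.length_append, List.length_singleton] at h3
    rw [lastN_append j (by omega)]
    exact hyB j (by omega) h2 h3
  · -- XC
    intro m hm1 hm2
    rcases Nat.eq_zero_or_pos m with hm0 | hmp
    · subst hm0
      rw [lastN_zero]
      have := hC 0 (Nat.zero_le _) (by omega)
      rwa [lastN_zero] at this
    · rw [lastN_append m (by omega)]
      exact hyC m (by omega) (by omega) hm2

def PathInv (c : Fin s) (L : List ℕ) : Prop :=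
  L.Nodup ∧ Tight k φ c L ∧ EndG k φ U c 0 L

lemma steps_y (hU : ∀ A : Set ℕ, A.Finite → Aᶜ ∈ U) (hk : 2 ≤ k) (c : Fin s) (x : ℕ) :
    ∀ (d i : ℕ), i + d = k - 1 → ∀ (M : List ℕ) (F : Finset ℕ),
      M.Nodup → x ∉ M → Tight k φ c M → EndG k φ U c i M → XC k φ U c x i M →
      ∃ M', (M <+: M') ∧ M'.length = M.length + d ∧
        (∀ z ∈ M', z ∈ M ∨ (z ∉ F ∧ z ≠ x)) ∧ M'.Nodup ∧ x ∉ M' ∧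
        Tight k φ c M' ∧ EndG k φ U c (k-1) M' ∧ XC k φ U c x (k-1) M' := by
  intro d
  induction d with
  | zero =>
    intro i hi M F hnd hxM ht hB hC
    have : i = k - 1 := by omega
    subst this
    exact ⟨M, List.prefix_refl M, by omega, fun z hz => Or.inl hz, hnd, hxM, ht, hB, hC⟩
  | succ d ih =>
    intro i hi M F hnd hxM ht hB hC
    obtain ⟨y, hyF, hyM, hyx, hnd', hxM', ht', hB', hC'⟩ :=
      step_y k φ U hU hk c x i M F (by omega) hnd hxM ht hB hC
    obtain ⟨M', hpre, hlen, hmem, h4, h5, h6, h7, h8⟩ :=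
      ih (i+1) (by omega) (M ++ [y]) F hnd' hxM' ht' hB' hC'
    refine ⟨M', (List.prefix_append M [y]).trans hpre, by simp at hlen; omega, ?_, h4, h5, h6, h7, h8⟩
    intro z hz
    rcases hmem z hz with hz1 | hz2
    · rcases List.mem_append.1 hz1 with h | h
      · exact Or.inl h
      · rw [List.mem_singleton] at h
        subst h
        exact Or.inr ⟨hyF, hyx⟩
    · exact Or.inr hz2

lemma absorb (hU : ∀ A : Set ℕ, A.Finite → Aᶜ ∈ U) (hk : 2 ≤ k) (c : Fin s) (x : ℕ)
    (hxc : g φ U (k-1) {x} = c) (L : List ℕ) (hL : PathInv k φ U c L) (F : Finset ℕ)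
    (hLF : ∀ z ∈ L, z ∈ F) (hxF : x ∉ F) :
    ∃ L', (L <+: L') ∧ L'.length = L.length + k ∧ x ∈ L' ∧
      (∀ z ∈ L', z ∈ L ∨ z = x ∨ z ∉ F) ∧ PathInv k φ U c L' := by
  obtain ⟨hnd, ht, hB⟩ := hL
  have hxL : x ∉ L := fun h => hxF (hLF x h)
  have hC : XC k φ U c x 0 L := by
    intro m hm _
    interval_cases m
    rw [lastN_zero]
    simpa using hxc
  obtain ⟨M', hpre, hlen, hmem, hnd', hxM', ht', hB', hC'⟩ :=
    steps_y k φ U hU hk c x (k-1) 0 (by omega) L F hnd hxL ht hB hC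
  refine ⟨M' ++ [x], hpre.trans (List.prefix_append M' [x]), by simp; omega,
    by simp, ?_, ?_, ?_, ?_⟩
  · intro z hz
    rcases List.mem_append.1 hz with h | h
    · rcases hmem z h with h1 | h2
      · exact Or.inl h1
      · exact Or.inr (Or.inr h2.1)
    · rw [List.mem_singleton] at h
      exact Or.inr (Or.inl h)
  · simp [List.nodup_append, hnd', hxM']
    intro a ha h; exact hxM' (h ▸ ha)
  · -- Tight
    intro i' hlen'
    simp only [List.length_append, List.length_singleton] at hlen'
    rcases Nat.lt_or_ge (i' + k) (M'.length + 1) with hlt | hge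
    · rw [winF_append k M' x i' (by omega)]
      exact ht' i' (by omega)
    · have hieq : i' + k = M'.length + 1 := by omega
      have hwin : winF k (M' ++ [x]) i' = lastN k (M' ++ [x]) := by
        unfold winF lastN
        congr 1
        simp only [List.length_append, List.length_singleton]
        congr 1 <;> omega
      rw [hwin, lastN_append k (by omega)]
      have := hC' (k-1) le_rfl le_rfl
      have heq : k - 1 - (k-1) = 0 := by omega
      rw [heq, g_zero] at this
      exact this
  · -- EndG
    intro j h1 h2 h3
    rw [lastN_append j (by omega)]
    have := hC' (j-1) (by omega) (by omega)
    have heq : k - 1 - (j-1) = k - j := by omega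
    rwa [heq] at this

def OkAll (P : Fin s → List ℕ) : Prop :=
  (∀ c, PathInv k φ U c (P c)) ∧ (∀ c, P c = [] ∨ k ≤ (P c).length) ∧
  (∀ c c', c ≠ c' → ∀ z, z ∈ P c → z ∉ P c')

lemma ok_empty (hk : 2 ≤ k) : OkAll k φ U (fun _ => []) := by
  refine ⟨fun c => ⟨List.nodup_nil, ?_, ?_⟩, fun c => Or.inl rfl, fun c c' _ z hz => by simp at hz⟩
  · intro i hi
    simp only [List.length_nil] at hi
    omega
  · intro j h1 h2 h3
    simp only [List.length_nil] at h3
    omega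

lemma step_exists (hU : ∀ A : Set ℕ, A.Finite → Aᶜ ∈ U) (hk : 2 ≤ k)
    (P : Fin s → List ℕ) (hP : OkAll k φ U P) (t : ℕ) :
    ∃ Q : Fin s → List ℕ, OkAll k φ U Q ∧ (∀ c, P c <+: Q c) ∧ (∃ c, t ∈ Q c) := by
  by_cases h : ∃ c, t ∈ P c
  · exact ⟨P, hP, fun c => List.prefix_refl _, h⟩
  push_neg at h
  set c0 := g φ U (k-1) ({t} : Finset ℕ) with hc0
  set F : Finset ℕ := Finset.univ.biUnion (fun c => (P c).toFinset) with hF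
  have hxF : t ∉ F := by
    simp only [hF, Finset.mem_biUnion, Finset.mem_univ, List.mem_toFinset, true_and, not_exists]
    exact h
  have hLF : ∀ c z, z ∈ P c → z ∈ F :=
    fun c z hz => Finset.mem_biUnion.2 ⟨c, Finset.mem_univ _, List.mem_toFinset.2 hz⟩
  obtain ⟨L', hpre, hlen, hxmem, hmem, hinv⟩ :=
    absorb k φ U hU hk c0 t rfl (P c0) (hP.1 c0) F (hLF c0) hxF
  refine ⟨Function.update P c0 L', ⟨?_, ?_, ?_⟩, ?_, ⟨c0, by rw [Function.update_self]; exact hxmem⟩⟩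
  · intro c
    by_cases hc : c = c0
    · subst hc; rw [Function.update_self]; exact hinv
    · rw [Function.update_of_ne hc]; exact hP.1 c
  · intro c
    by_cases hc : c = c0
    · subst hc; rw [Function.update_self]; right; omega
    · rw [Function.update_of_ne hc]; exact hP.2.1 c
  · intro c c' hne z hzc hzc'
    have key : ∀ c', c' ≠ c0 → z ∈ L' → z ∈ P c' → False := by
      intro c' hne' hL' hPc'
      rcases hmem z hL' with h1 | h2 | h3
      · exact hP.2.2 c0 c' (Ne.symm hne') z h1 hPc'
      · exact h c' (h2 ▸ hPc')
      · exact h3 (hLF c' z hPc')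
    by_cases hc : c = c0 <;> by_cases hc' : c' = c0
    · exact absurd (hc.trans hc'.symm) hne
    · subst hc; rw [Function.update_self] at hzc; rw [Function.update_of_ne hc'] at hzc'
      exact key c' hc' hzc hzc'
    · subst hc'; rw [Function.update_self] at hzc'; rw [Function.update_of_ne hc] at hzc
      exact key c hc hzc' hzc
    · rw [Function.update_of_ne hc] at hzc; rw [Function.update_of_ne hc'] at hzc'
      exact hP.2.2 c c' hne z hzc hzc'
  · intro c
    by_cases hc : c = c0
    · subst hc
      simpa [Function.update_self] using hpre
    · rw [Function.update_of_ne hc]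

variable (hU : ∀ A : Set ℕ, A.Finite → Aᶜ ∈ U) (hk : 2 ≤ k)

noncomputable def state : ℕ → {P : Fin s → List ℕ // OkAll k φ U P}
  | 0 => ⟨fun _ => [], ok_empty k φ U hk⟩
  | (t+1) => ⟨(step_exists k φ U hU hk _ (state t).2 t).choose,
              ((step_exists k φ U hU hk _ (state t).2 t).choose_spec).1⟩

lemma state_succ_prefix (t : ℕ) (c : Fin s) :
    (state k φ U hU hk t).1 c <+: (state k φ U hU hk (t+1)).1 c :=
  ((step_exists k φ U hU hk _ (state k φ U hU hk t).2 t).choose_spec).2.1 c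

lemma state_cover (t : ℕ) : ∃ c, t ∈ (state k φ U hU hk (t+1)).1 c :=
  ((step_exists k φ U hU hk _ (state k φ U hU hk t).2 t).choose_spec).2.2

lemma state_mono {t t' : ℕ} (h : t ≤ t') (c : Fin s) :
    (state k φ U hU hk t).1 c <+: (state k φ U hU hk t').1 c := by
  induction t' with
  | zero => have : t = 0 := by omega
            subst this; exact List.prefix_refl _
  | succ t' ih =>
    rcases Nat.lt_or_ge t (t'+1) with h1 | h2
    · exact (ih (by omega)).trans (state_succ_prefix k φ U hU hk t' c)
    · have : t = t' + 1 := by omega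
      subst this; exact List.prefix_refl _

lemma colour_class (c : Fin s) :
    ({z | ∃ t, z ∈ (state k φ U hU hk t).1 c} : Set ℕ) = ∅ ∨
    IsMonoTightPath k φ c {z | ∃ t, z ∈ (state k φ U hU hk t).1 c} := by
  set lst : ℕ → List ℕ := fun t => (state k φ U hU hk t).1 c with hlst
  have hmono : ∀ {t t'}, t ≤ t' → lst t <+: lst t' :=
    fun h => state_mono k φ U hU hk h c
  have hinv : ∀ t, PathInv k φ U c (lst t) := fun t => (state k φ U hU hk t).2.1 c
  have hlen : ∀ t, lst t = [] ∨ k ≤ (lst t).length := fun t => (state k φ U hU hk t).2.2.1 c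
  have hagree : ∀ t t', t ≤ t' → ∀ n, n < (lst t).length →
      (lst t).getD n 0 = (lst t').getD n 0 := by
    intro t t' h n hn
    have hn' : n < (lst t').length := lt_of_lt_of_le hn (hmono h).length_le
    rw [List.getD_eq_getElem _ _ hn, List.getD_eq_getElem _ _ hn']
    exact (hmono h).getElem hn
  by_cases hbdd : BddAbove (Set.range fun t => (lst t).length)
  · -- bounded: the path stabilises
    obtain ⟨t0, ht0⟩ : ∃ t0, ∀ t, (lst t).length ≤ (lst t0).length := by
      have hne : (Set.range fun t => (lst t).length).Nonempty := ⟨_, ⟨0, rfl⟩⟩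
      obtain ⟨t0, ht0⟩ := Nat.sSup_mem hne hbdd
      refine ⟨t0, fun t => ?_⟩
      have h := le_csSup hbdd (Set.mem_range_self t)
      simp only at h ht0
      omega
    have hXeq : {z | ∃ t, z ∈ lst t} = {z | z ∈ lst t0} := by
      ext z
      simp only [Set.mem_setOf_eq]
      constructor
      · rintro ⟨t, hz⟩
        rcases le_total t t0 with h | h
        · exact (hmono h).subset hz
        · have heq : lst t0 = lst t :=
            (hmono h).eq_of_length (le_antisymm (hmono h).length_le (ht0 t))
          rwa [← heq] at hz
      · intro hz; exact ⟨t0, hz⟩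
    rcases hlen t0 with hnil | hk'
    · left; rw [hXeq, hnil]; simp
    · right
      rw [hXeq]
      refine ⟨((lst t0).length : ℕ∞), fun n => (lst t0).getD n 0,
        Or.inr (by exact_mod_cast hk'), ?_, ?_, ?_⟩
      · intro i j hi hj hij
        rw [Nat.cast_lt] at hi hj
        dsimp only at hij
        rwa [List.getD_eq_getElem _ _ hi, List.getD_eq_getElem _ _ hj,
          (hinv t0).1.getElem_inj_iff] at hij
      · ext z
        simp only [Set.mem_setOf_eq]
        rw [List.mem_iff_getElem]
        constructor
        · rintro ⟨n, hn, rfl⟩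
          exact ⟨n, by exact_mod_cast hn, List.getD_eq_getElem _ _ hn⟩
        · rintro ⟨n, hn, rfl⟩
          rw [Nat.cast_lt] at hn
          exact ⟨n, hn, (List.getD_eq_getElem _ _ hn).symm⟩
      · intro i hik
        rw [Nat.cast_le] at hik
        have := (hinv t0).2.1 i hik
        simpa [winF] using this
  · -- unbounded: the path is infinite
    have hub : ∀ n, ∃ t, n < (lst t).length := by
      by_contra hcon
      push_neg at hcon
      obtain ⟨n, hn⟩ := hcon
      exact hbdd ⟨n, by rintro m ⟨t, rfl⟩; exact hn t⟩
    choose pick hpick using hub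
    have hco : ∀ n t, n < (lst t).length → (lst t).getD n 0 = (lst (pick n)).getD n 0 := by
      intro n t hn
      rw [hagree t (max t (pick n)) (le_max_left _ _) n hn,
        hagree (pick n) (max t (pick n)) (le_max_right _ _) n (hpick n)]
    right
    refine ⟨⊤, fun n => (lst (pick n)).getD n 0, Or.inr le_top, ?_, ?_, ?_⟩
    · intro i j _ _ hij
      dsimp only at hij
      set T := max (pick i) (pick j) with hT
      have hiT : i < (lst T).length :=
        lt_of_lt_of_le (hpick i) (hmono (le_max_left _ _)).length_le
      have hjT : j < (lst T).length :=
        lt_of_lt_of_le (hpick j) (hmono (le_max_right _ _)).length_le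
      rw [← hco i T hiT, ← hco j T hjT] at hij
      rwa [List.getD_eq_getElem _ _ hiT, List.getD_eq_getElem _ _ hjT,
        (hinv T).1.getElem_inj_iff] at hij
    · ext z
      simp only [Set.mem_setOf_eq]
      constructor
      · rintro ⟨t, hz⟩
        obtain ⟨n, hn, hz'⟩ := List.mem_iff_getElem.1 hz
        refine ⟨n, by exact_mod_cast ENat.coe_lt_top n, ?_⟩
        rw [← hco n t hn, List.getD_eq_getElem _ _ hn]
        exact hz'
      · rintro ⟨n, _, rfl⟩
        refine ⟨pick n, ?_⟩
        rw [List.getD_eq_getElem _ _ (hpick n)]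
        exact List.getElem_mem _
    · intro i _
      set T := pick (i + k) with hT
      have hik : i + k ≤ (lst T).length := le_of_lt (hpick (i + k))
      have htight := (hinv T).2.1 i hik
      have himg : Finset.image (fun n => (lst (pick n)).getD n 0) (Finset.Ico i (i + k))
          = winF k (lst T) i := by
        unfold winF
        apply Finset.image_congr
        intro n hn
        simp only [Finset.coe_Ico, Set.mem_Ico] at hn
        exact (hco n T (by omega)).symm
      rw [himg]
      exact htight

end ESSS

/-- Elekes–Soukup–Soukup–Szentmiklóssy: for every `s`-colouring of the `k`-sets
of `ℕ`, the vertices can be partitioned into the cores of at most `s`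
monochromatic tight paths of pairwise distinct colours. -/
theorem tight_path_partition (s k : ℕ) (hk : 2 ≤ k) (hs : 1 ≤ s)
    (φ : Finset ℕ → Fin s) :
    ∃ (X : Fin s → Set ℕ) (c : Fin s → Fin s),
      Function.Injective c ∧
      (∀ i : Fin s, X i = ∅ ∨ IsMonoTightPath k φ (c i) (X i)) ∧
      (∀ i j : Fin s, i ≠ j → Disjoint (X i) (X j)) ∧
      (⋃ i, X i) = Set.univ := by
  obtain ⟨U, hU⟩ : ∃ U : Ultrafilter ℕ, ∀ A : Set ℕ, A.Finite → Aᶜ ∈ U :=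
    ⟨Ultrafilter.of Filter.cofinite, fun A hA => Ultrafilter.of_le _ hA.compl_mem_cofinite⟩
  refine ⟨fun i => {z | ∃ t, z ∈ (ESSS.state k φ U hU hk t).1 i}, id,
    Function.injective_id, ?_, ?_, ?_⟩
  · intro i
    exact ESSS.colour_class k φ U hU hk i
  · intro i j hij
    rw [Set.disjoint_left]
    rintro z ⟨t, hz⟩ ⟨t', hz'⟩
    have hz2 := (ESSS.state_mono k φ U hU hk (le_max_left t t') i).subset hz
    have hz2' := (ESSS.state_mono k φ U hU hk (le_max_right t t') j).subset hz'
    exact (ESSS.state k φ U hU hk (max t t')).2.2.2 i j hij z hz2 hz2'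
  · apply Set.eq_univ_of_forall
    intro m
    obtain ⟨c, hc⟩ := ESSS.state_cover k φ U hU hk m
    exact Set.mem_iUnion.2 ⟨c, m+1, hc⟩
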